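/- Let β₁ > 0 and define μ' : ℝ² → ℝ by μ'(α,β) = −1 if −β₁ < β < 0 and 0 < α < β + β₁; μ'(α,β) = 1 if −β₁ < β ≤ α < β₁ and not (−β₁ < β < 0 and 0 < α < β + β₁); and μ'(α,β) = 0 otherwise. Then ∬_{[0,β₁]×[−β₁,0]} μ'(α,β) dα dβ = 0 (the integral taken over α ∈ [0,β₁], β ∈ [−β₁,0]); hence the hysteresis loop of the Preisach operator with weighting μ' under a periodic input with minimum −β₁ and maximum β₁ has a crossover point at input value u_c = 0. -/

import Mathlib

/-!
STATEMENT 12: For the weighting function μ' (which produces a hysteresis loop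
with two subloops of the same orientation), the integral of μ' over the
rectangle [0,β₁] × [−β₁,0] vanishes; hence the major hysteresis loop of the
corresponding Preisach operator has a crossover point at input value 0.
-/

open MeasureTheory

/-- The weighting function μ' : `−1` on `P₁₋ = {−β₁ < β < 0, 0 < α < β + β₁}`,
`+1` on the rest of `P₁ = {−β₁ < β ≤ α < β₁}`, and `0` outside `P₁`. -/
noncomputable def sameOrientationWeight (β₁ : ℝ) : ℝ × ℝ → ℝ := fun p =>
  if -β₁ < p.2 ∧ p.2 < 0 ∧ 0 < p.1 ∧ p.1 < p.2 + β₁ then (-1 : ℝ)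
  else if -β₁ < p.2 ∧ p.2 ≤ p.1 ∧ p.1 < β₁ then 1
  else 0

lemma sameOrientationWeight_measurable (β₁ : ℝ) :
    Measurable (sameOrientationWeight β₁) := by
  unfold sameOrientationWeight
  refine Measurable.ite ?_ measurable_const
    (Measurable.ite ?_ measurable_const measurable_const)
  · refine MeasurableSet.inter ?_ (MeasurableSet.inter ?_ (MeasurableSet.inter ?_ ?_))
    · exact measurableSet_lt measurable_const measurable_snd
    · exact measurableSet_lt measurable_snd measurable_const
    · exact measurableSet_lt measurable_const measurable_fst
    · exact measurableSet_lt measurable_fst (measurable_snd.add measurable_const)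
  · refine MeasurableSet.inter ?_ (MeasurableSet.inter ?_ ?_)
    · exact measurableSet_lt measurable_const measurable_snd
    · exact measurableSet_le measurable_snd measurable_fst
    · exact measurableSet_lt measurable_fst measurable_const

lemma sameOrientationWeight_bound (β₁ : ℝ) (p : ℝ × ℝ) :
    ‖sameOrientationWeight β₁ p‖ ≤ 1 := by
  unfold sameOrientationWeight
  split_ifs <;> norm_num

theorem same_orientation_crossover (β₁ : ℝ) (hβ₁ : 0 < β₁) :
    (∫ p in Set.Icc (0 : ℝ) β₁ ×ˢ Set.Icc (-β₁) (0 : ℝ),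
      sameOrientationWeight β₁ p) = 0 := by
  set f := sameOrientationWeight β₁ with hf
  have hmeas := sameOrientationWeight_measurable β₁
  have hIntOn : IntegrableOn f (Set.Icc (0 : ℝ) β₁ ×ˢ Set.Icc (-β₁) (0 : ℝ)) := by
    apply Measure.integrableOn_of_bounded (M := 1)
      ((isCompact_Icc.prod isCompact_Icc).measure_lt_top).ne
      hmeas.aestronglyMeasurable
    exact Filter.Eventually.of_forall fun p => sameOrientationWeight_bound β₁ p
  rw [MeasureTheory.Measure.volume_eq_prod] at hIntOn ⊢
  rw [MeasureTheory.setIntegral_prod _ hIntOn]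
  -- now an iterated integral: outer over α in Icc 0 β₁, inner over β in Icc (-β₁) 0
  rw [MeasureTheory.integral_Icc_eq_integral_Ioo]
  have key : ∀ α ∈ Set.Ioo (0 : ℝ) β₁,
      (∫ β in Set.Icc (-β₁) (0 : ℝ), f (α, β)) = 2 * α - β₁ := by
    intro α hα
    obtain ⟨hα0, hα1⟩ := hα
    rw [MeasureTheory.integral_Icc_eq_integral_Ioo]
    have hsplit : Set.Ioo (-β₁) (0 : ℝ)
        = Set.Ioc (-β₁) (α - β₁) ∪ Set.Ioo (α - β₁) 0 :=
      (Set.Ioc_union_Ioo_eq_Ioo (by linarith) (by linarith)).symm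
    have hdisj : Disjoint (Set.Ioc (-β₁) (α - β₁)) (Set.Ioo (α - β₁) (0 : ℝ)) := by
      apply Set.disjoint_left.mpr
      rintro x ⟨_, h1⟩ ⟨h2, _⟩
      linarith
    have h1 : Set.EqOn (fun β => f (α, β)) (fun _ => (1 : ℝ))
        (Set.Ioc (-β₁) (α - β₁)) := by
      rintro β ⟨hb1, hb2⟩
      show f (α, β) = 1
      rw [hf]
      unfold sameOrientationWeight
      rw [if_neg (by rintro ⟨_, _, _, h⟩; simp at h; linarith),
        if_pos ⟨by simpa using hb1, by simp; linarith, by simpa using hα1⟩]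
    have h2 : Set.EqOn (fun β => f (α, β)) (fun _ => (-1 : ℝ))
        (Set.Ioo (α - β₁) (0 : ℝ)) := by
      rintro β ⟨hb1, hb2⟩
      show f (α, β) = -1
      rw [hf]
      unfold sameOrientationWeight
      rw [if_pos ⟨by simp; linarith, by simpa using hb2, by simpa using hα0,
        by simp; linarith⟩]
    have hi1 : IntegrableOn (fun β => f (α, β)) (Set.Ioc (-β₁) (α - β₁)) := by
      rw [integrableOn_congr_fun h1 measurableSet_Ioc]
      exact integrableOn_const measure_Ioc_lt_top.ne
    have hi2 : IntegrableOn (fun β => f (α, β)) (Set.Ioo (α - β₁) (0 : ℝ)) := by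
      rw [integrableOn_congr_fun h2 measurableSet_Ioo]
      exact integrableOn_const measure_Ioo_lt_top.ne
    rw [hsplit, MeasureTheory.setIntegral_union hdisj measurableSet_Ioo hi1 hi2,
      MeasureTheory.setIntegral_congr_fun measurableSet_Ioc h1,
      MeasureTheory.setIntegral_congr_fun measurableSet_Ioo h2,
      MeasureTheory.setIntegral_const, MeasureTheory.setIntegral_const,
      Real.volume_real_Ioc_of_le (by linarith), Real.volume_real_Ioo_of_le (by linarith)]
    simp
    ring
  rw [MeasureTheory.setIntegral_congr_fun measurableSet_Ioo key]
  rw [← MeasureTheory.integral_Ioc_eq_integral_Ioo,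
    ← intervalIntegral.integral_of_le (le_of_lt hβ₁)]
  have : (∫ α in (0:ℝ)..β₁, (2 * α - β₁)) = 0 := by
    rw [intervalIntegral.integral_sub
      ((intervalIntegral.intervalIntegrable_id).const_mul 2) intervalIntegrable_const]
    rw [intervalIntegral.integral_const_mul, integral_id, intervalIntegral.integral_const]
    simp
    ring
  exact this
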